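/- Let E be a 4×4 complex matrix with 0 ≤ E ≤ 1 (positive semidefinite with all eigenvalues at most 1). Then |E_{20}|² + |E_{30}|² ≤ 1/4 and |E_{30}|² + |E_{31}|² ≤ 1/4, where E_{ij} denotes the (i,j) matrix entry (0-indexed). -/

import Mathlib

open Matrix
open scoped ComplexOrder

lemma sub_sq_psd (E : Matrix (Fin 4) (Fin 4) ℂ)
    (hE : E.PosSemidef) (hE1 : ((1 : Matrix (Fin 4) (Fin 4) ℂ) - E).PosSemidef) :
    (E - E * E).PosSemidef := by
  obtain ⟨S, hS1, hS2⟩ : ∃ S : Matrix (Fin 4) (Fin 4) ℂ, Sᴴ = S ∧ S * S = E :=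
    (by
      open scoped MatrixOrder in
      obtain ⟨X, hX, -, hXX⟩ := CFC.exists_sqrt_of_isSelfAdjoint_of_quasispectrumRestricts
        hE.isHermitian (QuasispectrumRestricts.nnreal_of_nonneg hE.nonneg)
      exact ⟨X, hX, hXX⟩)
  have h := hE1.conjTranspose_mul_mul_same S
  rw [hS1] at h
  have heq : S * (1 - E) * S = E - E * E := by
    rw [mul_sub, mul_one, sub_mul, hS2, ← hS2]
    simp only [mul_assoc]
  rwa [heq] at h

lemma diag_entry_nonneg {M : Matrix (Fin 4) (Fin 4) ℂ} (hM : M.PosSemidef) (i : Fin 4) :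
    0 ≤ M i i := by
  exact hM.diag_nonneg

theorem stmt15 (E : Matrix (Fin 4) (Fin 4) ℂ)
    (hE : E.PosSemidef) (hE1 : ((1 : Matrix (Fin 4) (Fin 4) ℂ) - E).PosSemidef) :
    ‖E 2 0‖ ^ 2 + ‖E 3 0‖ ^ 2 ≤ 1 / 4 ∧
    ‖E 3 0‖ ^ 2 + ‖E 3 1‖ ^ 2 ≤ 1 / 4 := by
  have hherm : ∀ i j, E j i = (starRingEnd ℂ) (E i j) := by
    intro i j
    conv_lhs => rw [← hE.1.eq]
    rfl
  have hdiag : ∀ i, (E i i).im = 0 ∧ 0 ≤ (E i i).re ∧ (E i i).re ≤ 1 := by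
    intro i
    have h1 := diag_entry_nonneg hE i
    have h2 := diag_entry_nonneg hE1 i
    rw [Complex.le_def] at h1 h2
    simp only [Matrix.sub_apply, Matrix.one_apply_eq, Complex.sub_re, Complex.sub_im,
      Complex.zero_re, Complex.zero_im, Complex.one_re, Complex.one_im] at h1 h2
    refine ⟨h1.2.symm, h1.1, by linarith [h2.1]⟩
  have key : ∀ i, ‖E i 0‖ ^ 2 + ‖E i 1‖ ^ 2 +
      ‖E i 2‖ ^ 2 + ‖E i 3‖ ^ 2 ≤ (E i i).re := by
    intro i
    have h := (diag_entry_nonneg (sub_sq_psd E hE hE1) i)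
    rw [Complex.le_def] at h
    have hmul : (E * E) i i = E i 0 * E 0 i + E i 1 * E 1 i + E i 2 * E 2 i + E i 3 * E 3 i := by
      simp [Matrix.mul_apply, Fin.sum_univ_four]
    have hre : ((E * E) i i).re = ‖E i 0‖ ^ 2 + ‖E i 1‖ ^ 2 +
        ‖E i 2‖ ^ 2 + ‖E i 3‖ ^ 2 := by
      rw [hmul, hherm 0 i, hherm 1 i, hherm 2 i, hherm 3 i]
      simp [Complex.mul_conj, ← Complex.sq_norm, Complex.normSq_apply,
        Complex.sq_norm]
    have h1 := h.1
    simp only [Matrix.sub_apply, Complex.sub_re, Complex.zero_re, hre] at h1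
    linarith
  have hii : ∀ i, ‖E i i‖ ^ 2 = (E i i).re ^ 2 := by
    intro i
    rw [Complex.sq_norm, Complex.normSq_apply, (hdiag i).1]
    ring
  have h0 := key 0
  have h3 := key 3
  have e00 := hdiag 0
  have e33 := hdiag 3
  rw [hii 0] at h0
  rw [hii 3] at h3
  have a10 : ‖E 0 1‖ = ‖E 1 0‖ := by
    rw [hherm 1 0]; exact Complex.norm_conj _
  have a20 : ‖E 0 2‖ = ‖E 2 0‖ := by
    rw [hherm 2 0]; exact Complex.norm_conj _
  have a30 : ‖E 0 3‖ = ‖E 3 0‖ := by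
    rw [hherm 3 0]; exact Complex.norm_conj _
  rw [a10, a20, a30] at h0
  constructor
  · nlinarith [sq_nonneg ((E 0 0).re - 1/2), sq_nonneg (‖E 1 0‖)]
  · nlinarith [sq_nonneg ((E 3 3).re - 1/2), sq_nonneg (‖E 3 2‖)]
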